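/- The number L_1(n,k) of k-element subsets of n linearly arranged objects containing no two elements in alternate positions (positions differing by exactly 2) satisfies L_1(n,k) = Σ_{ℓ=0}^{k} C(⌊n/2⌋ − ℓ + 1, ℓ) · C(⌈n/2⌉ − (k−ℓ) + 1, k−ℓ). -/

import Mathlib

open Finset

def Acnt (m j : ℕ) : ℕ :=
  (((range m).powersetCard j).filter fun s => ∀ i ∈ s, i + 1 ∉ s).card

lemma Acnt_zero_right (m : ℕ) : Acnt m 0 = 1 := by
  unfold Acnt
  rw [powersetCard_zero, filter_eq_self.2 (by intro s hs; simp_all)]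
  simp

lemma Acnt_of_lt (m j : ℕ) (hj : m < j) : Acnt m j = 0 := by
  unfold Acnt
  rw [powersetCard_eq_empty.2 (by simpa using hj)]
  simp

lemma Acnt_one_one : Acnt 1 1 = 1 := by
  unfold Acnt
  have h1 : (range 1).powersetCard 1 = {{0}} := by decide
  rw [h1, filter_eq_self.2]
  · simp
  · intro s hs
    simp only [mem_singleton] at hs
    subst hs
    intro i hi
    simp only [mem_singleton] at hi ⊢
    omega

lemma Acnt_rec (m j : ℕ) : Acnt (m + 2) (j + 1) = Acnt (m + 1) (j + 1) + Acnt m j := by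
  classical
  unfold Acnt
  rw [← Finset.card_filter_add_card_filter_not
      (p := fun s => (m + 1) ∉ s)]
  congr 1
  · -- sets not containing m+1 ↔ Acnt (m+1) (j+1)
    congr 1
    ext s
    simp only [mem_filter, mem_powersetCard]
    constructor
    · rintro ⟨⟨⟨hsub, hcard⟩, hspread⟩, hnm⟩
      refine ⟨⟨?_, hcard⟩, hspread⟩
      intro x hx
      have hx2 := hsub hx
      rw [mem_range] at hx2 ⊢
      have : x ≠ m + 1 := fun h => hnm (h ▸ hx)
      omega
    · rintro ⟨⟨hsub, hcard⟩, hspread⟩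
      have hnm : m + 1 ∉ s := by
        intro h
        have := hsub h
        rw [mem_range] at this
        omega
      refine ⟨⟨⟨?_, hcard⟩, hspread⟩, hnm⟩
      intro x hx
      have := hsub hx
      rw [mem_range] at this ⊢
      omega
  · -- sets containing m+1  ↔ Acnt m j
    rw [Finset.filter_filter]
    simp only [not_not]
    refine Finset.card_bij' (fun s _ => s.erase (m + 1)) (fun t _ => insert (m + 1) t)
      ?_ ?_ ?_ ?_
    · intro s hs
      simp only [mem_filter, mem_powersetCard] at hs ⊢
      obtain ⟨⟨hsub, hcard⟩, hspread, hmem⟩ := hs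
      refine ⟨⟨?_, ?_⟩, ?_⟩
      · intro x hx
        rw [mem_erase] at hx
        have hx2 := hsub hx.2
        rw [mem_range] at hx2 ⊢
        have : x ≠ m := by
          rintro rfl
          exact hspread x hx.2 hmem
        omega
      · simp [card_erase_of_mem hmem, hcard]
      · intro i hi
        rw [mem_erase] at hi ⊢
        exact fun h => hspread i hi.2 h.2
    · intro t ht
      simp only [mem_filter, mem_powersetCard] at ht ⊢
      obtain ⟨⟨hsub, hcard⟩, hspread⟩ := ht
      have hnm : m + 1 ∉ t := by
        intro h
        have := hsub h
        rw [mem_range] at this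
        omega
      refine ⟨⟨?_, ?_⟩, ?_, ?_⟩
      · intro x hx
        rw [mem_insert] at hx
        rcases hx with rfl | hx
        · rw [mem_range]; omega
        · have := hsub hx; rw [mem_range] at this ⊢; omega
      · rw [card_insert_of_notMem hnm, hcard]
      · intro i hi
        rw [mem_insert] at hi ⊢
        push_neg
        rcases hi with rfl | hi
        · refine ⟨by omega, fun h => ?_⟩
          have := hsub h
          rw [mem_range] at this
          omega
        · have := hsub hi
          rw [mem_range] at this
          exact ⟨by omega, hspread i hi⟩
      · exact mem_insert_self _ _
    · intro s hs
      simp only [mem_filter] at hs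
      exact insert_erase hs.2.2
    · intro t ht
      simp only [mem_filter, mem_powersetCard] at ht
      have hnm : m + 1 ∉ t := by
        intro h
        have := ht.1.1 h
        rw [mem_range] at this
        omega
      exact erase_insert hnm

lemma Acnt_eq : ∀ m j : ℕ, Acnt m j = (m + 1 - j).choose j := by
  intro m
  induction m using Nat.strong_induction_on with
  | _ m ih =>
    intro j
    match m, j with
    | 0, 0 => simp [Acnt_zero_right]
    | 0, j + 1 => rw [Acnt_of_lt _ _ (by omega)]; simp [Nat.choose_eq_zero_of_lt]
    | 1, 0 => simp [Acnt_zero_right]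
    | 1, 1 => rw [Acnt_one_one]; simp
    | 1, j + 2 =>
      rw [Acnt_of_lt _ _ (by omega)]
      rw [Nat.choose_eq_zero_of_lt (by omega)]
    | m + 2, 0 => simp [Acnt_zero_right]
    | m + 2, j + 1 =>
      rw [Acnt_rec, ih (m + 1) (by omega), ih m (by omega)]
      rcases le_or_gt (j + 1) (m + 1) with h | h
      · have h1 : m + 2 + 1 - (j + 1) = (m + 1 - j) + 1 := by omega
        have h2 : m + 1 + 1 - (j + 1) = m + 1 - j := by omega
        rw [h1, h2]
        rcases (by omega : m + 1 - j = (m - j) + 1 ∨ (j = m + 1 ∧ m + 1 - j = 0)) with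
          h3 | ⟨rfl, h3⟩
        · rw [h3]
          conv_rhs => rw [Nat.choose_succ_succ' (m - j + 1) j]
          omega
        · rw [h3]
          rw [Nat.choose_eq_zero_of_lt (by omega), Nat.choose_eq_zero_of_lt (by omega),
            Nat.choose_eq_zero_of_lt (by omega)]
      · rw [Nat.choose_eq_zero_of_lt (by omega), Nat.choose_eq_zero_of_lt (by omega),
          Nat.choose_eq_zero_of_lt (by omega)]


def oddPart (s : Finset ℕ) : Finset ℕ := (s.filter fun x => x % 2 = 1).image (· / 2)
def evenPart (s : Finset ℕ) : Finset ℕ := (s.filter fun x => x % 2 = 0).image (· / 2)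
def recon (t u : Finset ℕ) : Finset ℕ :=
  (t.image fun q => 2 * q + 1) ∪ (u.image fun q => 2 * q)

lemma mem_oddPart {s : Finset ℕ} {q : ℕ} :
    q ∈ oddPart s ↔ 2 * q + 1 ∈ s := by
  simp only [oddPart, mem_image, mem_filter]
  constructor
  · rintro ⟨x, ⟨hx, hpar⟩, rfl⟩
    have : 2 * (x / 2) + 1 = x := by omega
    rwa [this]
  · intro h
    exact ⟨2 * q + 1, ⟨h, by omega⟩, by omega⟩

lemma mem_evenPart {s : Finset ℕ} {q : ℕ} :
    q ∈ evenPart s ↔ 2 * q ∈ s := by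
  simp only [evenPart, mem_image, mem_filter]
  constructor
  · rintro ⟨x, ⟨hx, hpar⟩, rfl⟩
    have : 2 * (x / 2) = x := by omega
    rwa [this]
  · intro h
    exact ⟨2 * q, ⟨h, by omega⟩, by omega⟩

lemma mem_recon {t u : Finset ℕ} {x : ℕ} :
    x ∈ recon t u ↔ (x % 2 = 1 ∧ x / 2 ∈ t) ∨ (x % 2 = 0 ∧ x / 2 ∈ u) := by
  simp only [recon, mem_union, mem_image]
  constructor
  · rintro (⟨q, hq, rfl⟩ | ⟨q, hq, rfl⟩)
    · exact Or.inl ⟨by omega, by rwa [(by omega : (2 * q + 1) / 2 = q)]⟩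
    · exact Or.inr ⟨by omega, by rwa [(by omega : (2 * q) / 2 = q)]⟩
  · rintro (⟨hp, hq⟩ | ⟨hp, hq⟩)
    · exact Or.inl ⟨x / 2, hq, by omega⟩
    · exact Or.inr ⟨x / 2, hq, by omega⟩

lemma recon_parts (s : Finset ℕ) : recon (oddPart s) (evenPart s) = s := by
  ext x
  rw [mem_recon, mem_oddPart, mem_evenPart]
  constructor
  · rintro (⟨hp, h⟩ | ⟨hp, h⟩)
    · rwa [(by omega : 2 * (x / 2) + 1 = x)] at h
    · rwa [(by omega : 2 * (x / 2) = x)] at h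
  · intro hx
    rcases Nat.even_or_odd x with h | h
    · rw [Nat.even_iff] at h
      right
      refine ⟨h, ?_⟩
      rw [(by omega : 2 * (x / 2) = x)]
      exact hx
    · left
      rw [Nat.odd_iff] at h
      refine ⟨h, ?_⟩
      rw [(by omega : 2 * (x / 2) + 1 = x)]
      exact hx

lemma oddPart_recon (t u : Finset ℕ) : oddPart (recon t u) = t := by
  ext q
  rw [mem_oddPart, mem_recon]
  constructor
  · rintro (⟨hp, h⟩ | ⟨hp, h⟩)
    · rwa [(by omega : (2 * q + 1) / 2 = q)] at h
    · omega
  · intro h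
    exact Or.inl ⟨by omega, by rwa [(by omega : (2 * q + 1) / 2 = q)]⟩

lemma evenPart_recon (t u : Finset ℕ) : evenPart (recon t u) = u := by
  ext q
  rw [mem_evenPart, mem_recon]
  constructor
  · rintro (⟨hp, h⟩ | ⟨hp, h⟩)
    · omega
    · rwa [(by omega : (2 * q) / 2 = q)] at h
  · intro h
    exact Or.inr ⟨by omega, by rwa [(by omega : (2 * q) / 2 = q)]⟩

lemma card_parts (s : Finset ℕ) : (evenPart s).card + (oddPart s).card = s.card := by
  have he : (evenPart s).card = (s.filter fun x => x % 2 = 0).card := by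
    apply card_image_of_injOn
    intro x hx y hy hxy
    simp only [mem_filter, coe_filter, Set.mem_setOf_eq] at hx hy
    have hxy' : x / 2 = y / 2 := hxy
    omega
  have ho : (oddPart s).card = (s.filter fun x => x % 2 = 1).card := by
    apply card_image_of_injOn
    intro x hx y hy hxy
    simp only [mem_filter, coe_filter, Set.mem_setOf_eq] at hx hy
    have hxy' : x / 2 = y / 2 := hxy
    omega
  rw [he, ho]
  rw [← Finset.card_filter_add_card_filter_not (s := s) (p := fun x => x % 2 = 0)]
  congr 1
  have h2 : (s.filter fun x => x % 2 = 1) = s.filter (fun a => ¬a % 2 = 0) :=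
    filter_congr (by intro x _; omega)
  rw [h2]

lemma slice_card (n k ℓ : ℕ) (hℓ : ℓ ≤ k) :
    ((((range n).powersetCard k).filter fun s => ∀ i ∈ s, i + 2 ∉ s).filter
        fun s => (oddPart s).card = ℓ).card =
      Acnt (n / 2) ℓ * Acnt ((n + 1) / 2) (k - ℓ) := by
  classical
  unfold Acnt
  rw [← Finset.card_product]
  refine Finset.card_bij' (fun s _ => (oddPart s, evenPart s))
    (fun p _ => recon p.1 p.2) ?_ ?_ ?_ ?_
  · intro s hs
    simp only [mem_filter, mem_powersetCard, Finset.mem_product] at hs ⊢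
    obtain ⟨⟨⟨hsub, hcard⟩, hspread⟩, hodd⟩ := hs
    have hcards := card_parts s
    refine ⟨⟨⟨?_, hodd⟩, ?_⟩, ⟨?_, by omega⟩, ?_⟩
    · -- oddPart ⊆ range (n/2)
      intro q hq
      rw [mem_oddPart] at hq
      have := hsub hq
      rw [mem_range] at this ⊢
      omega
    · -- oddPart spread
      intro q hq hq1
      rw [mem_oddPart] at hq hq1
      exact hspread _ hq (by rw [show 2 * q + 1 + 2 = 2 * (q + 1) + 1 from by omega]; exact hq1)
    · -- evenPart ⊆ range ((n+1)/2)
      intro q hq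
      rw [mem_evenPart] at hq
      have := hsub hq
      rw [mem_range] at this ⊢
      omega
    · -- evenPart spread
      intro q hq hq1
      rw [mem_evenPart] at hq hq1
      exact hspread _ hq (by rw [show 2 * q + 2 = 2 * (q + 1) from by omega]; exact hq1)
  · rintro ⟨t, u⟩ hp
    simp only [Finset.mem_product, mem_filter, mem_powersetCard] at hp ⊢
    obtain ⟨⟨⟨htsub, htcard⟩, htsp⟩, ⟨husub, hucard⟩, husp⟩ := hp
    have hrcard : (recon t u).card = k := by
      have := card_parts (recon t u)
      rw [oddPart_recon, evenPart_recon] at this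
      omega
    refine ⟨⟨⟨?_, hrcard⟩, ?_⟩, ?_⟩
    · intro x hx
      rw [mem_recon] at hx
      rw [mem_range]
      rcases hx with ⟨hp2, hq⟩ | ⟨hp2, hq⟩
      · have := htsub hq; rw [mem_range] at this; omega
      · have := husub hq; rw [mem_range] at this; omega
    · intro x hx hx2
      rw [mem_recon] at hx hx2
      rcases hx with ⟨hp2, hq⟩ | ⟨hp2, hq⟩
      · rcases hx2 with ⟨hp3, hq3⟩ | ⟨hp3, hq3⟩
        · exact htsp _ hq (by rw [show x / 2 + 1 = (x + 2) / 2 from by omega]; exact hq3)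
        · omega
      · rcases hx2 with ⟨hp3, hq3⟩ | ⟨hp3, hq3⟩
        · omega
        · exact husp _ hq (by rw [show x / 2 + 1 = (x + 2) / 2 from by omega]; exact hq3)
    · rw [oddPart_recon, htcard]
  · intro s hs
    exact recon_parts s
  · rintro ⟨t, u⟩ _
    simp only [oddPart_recon, evenPart_recon]

open Classical in
/-- The number `L₁(n,k)` of `k`-element subsets of `n` linearly arranged positions
containing no two positions differing by exactly `2` satisfies
`L₁(n,k) = Σ_{ℓ=0}^{k} C(⌊n/2⌋ - ℓ + 1, ℓ) · C(⌈n/2⌉ - (k-ℓ) + 1, k-ℓ)`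
(with the convention that `C(a,b) = 0` for negative `a - b + 1`, realised here by
truncated subtraction `a + 1 - b`). -/
theorem count_no_two_alternate (n k : ℕ) :
    (Finset.univ.filter fun s : Finset (Fin n) =>
        s.card = k ∧ ¬∃ i ∈ s, ∃ j ∈ s, (j : ℕ) = (i : ℕ) + 2).card =
      ∑ ℓ ∈ Finset.range (k + 1),
        Nat.choose (n / 2 + 1 - ℓ) ℓ *
          Nat.choose ((n + 1) / 2 + 1 - (k - ℓ)) (k - ℓ) := by
  classical
  have hT : (Finset.univ.filter fun s : Finset (Fin n) =>
        s.card = k ∧ ¬∃ i ∈ s, ∃ j ∈ s, (j : ℕ) = (i : ℕ) + 2).card =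
      (((range n).powersetCard k).filter fun s => ∀ i ∈ s, i + 2 ∉ s).card := by
    refine Finset.card_bij' (fun s _ => s.image Fin.val)
      (fun t ht => t.attachFin ?_) ?_ ?_ ?_ ?_
    · intro m hm
      simp only [mem_filter, mem_powersetCard] at ht
      have := ht.1.1 hm
      rwa [mem_range] at this
    · intro s hs
      simp only [mem_filter, mem_univ, true_and] at hs
      simp only [mem_filter, mem_powersetCard]
      obtain ⟨hcard, hno⟩ := hs
      refine ⟨⟨?_, ?_⟩, ?_⟩
      · intro x hx
        rw [mem_image] at hx
        obtain ⟨a, _, rfl⟩ := hx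
        rw [mem_range]
        exact a.is_lt
      · rw [card_image_of_injective _ Fin.val_injective, hcard]
      · intro i hi hi2
        rw [mem_image] at hi hi2
        obtain ⟨a, ha, rfl⟩ := hi
        obtain ⟨b, hb, hab⟩ := hi2
        exact hno ⟨a, ha, b, hb, hab⟩
    · intro t ht
      simp only [mem_filter, mem_powersetCard] at ht
      obtain ⟨⟨hsub, hcard⟩, hsp⟩ := ht
      simp only [mem_filter, mem_univ, true_and]
      constructor
      · rw [card_attachFin, hcard]
      · rintro ⟨a, ha, b, hb, hab⟩
        rw [mem_attachFin] at ha hb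
        exact hsp _ ha (hab ▸ hb)
    · intro s hs
      ext a
      simp only [mem_attachFin, mem_image]
      constructor
      · rintro ⟨b, hb, hba⟩
        rwa [← Fin.val_injective hba]
      · intro ha
        exact ⟨a, ha, rfl⟩
    · intro t ht
      simp only [mem_filter, mem_powersetCard] at ht
      ext x
      simp only [mem_image, mem_attachFin]
      constructor
      · rintro ⟨a, ha, rfl⟩
        exact ha
      · intro hx
        have hxn : x < n := by
          have := ht.1.1 hx
          rwa [mem_range] at this
        exact ⟨⟨x, hxn⟩, hx, rfl⟩
  rw [hT]
  rw [Finset.card_eq_sum_card_fiberwise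
    (f := fun s => (oddPart s).card) (t := range (k + 1)) ?_]
  · refine Finset.sum_congr rfl fun ℓ hℓ => ?_
    rw [mem_range] at hℓ
    rw [slice_card n k ℓ (by omega), Acnt_eq, Acnt_eq]
  · intro s hs
    simp only [mem_coe, mem_filter, mem_powersetCard] at hs
    simp only [mem_coe, mem_range]
    have h0 : s.card = k := hs.1.2
    have h1 : (oddPart s).card ≤ (s.filter fun x => x % 2 = 1).card :=
      card_image_le
    have h2 : (s.filter fun x => x % 2 = 1).card ≤ s.card := card_filter_le _ _
    omega
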